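/- For k ≥ r ≥ 3 and m ≥ 0, let π be a partition in C_<(k,r|p,t) where p + t = m. Then there do not exist integers p' and t' with p' ≠ p, t' ≠ t, p' + t' = m and π ∈ C_<(k,r|p',t'). In other words, for each partition in C_<(k,r|m) = ⋃_{p+t=m} C_<(k,r|p,t), the pair (p,t) with p+t = m and π ∈ C_<(k,r|p,t) is unique. -/

import Mathlib

namespace Bressoud

/-- A partition: a weakly decreasing list of positive integers. -/
structure Partition where
  parts : List ℕ
  pos : ∀ x ∈ parts, 0 < x
  sorted : parts.Pairwise (· ≥ ·)

namespace Partition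

/-- `|π|`, the sum of the parts of `π`. -/
def size (π : Partition) : ℕ := π.parts.sum

/-- `ℓ(π)`, the number of parts of `π`. -/
def numParts (π : Partition) : ℕ := π.parts.length

end Partition

lemma exists_pos_not_mem (s : List ℕ) : ∃ n, 0 < n ∧ n ∉ s := by
  refine ⟨s.sum + 1, Nat.succ_pos _, fun h => ?_⟩
  have := List.single_le_sum (l := s) (fun x _ => Nat.zero_le x) _ h
  omega

/-- The least positive integer not occurring in `s`. -/
def mex1 (s : List ℕ) : ℕ := Nat.find (exists_pos_not_mem s)

/-- Parts `p ≥ q` conflict (must receive different marks) when `p - q ≤ 2`,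
with strict inequality when `p` is odd. -/
def conflict (p q : ℕ) : Bool :=
  if p % 2 = 1 then decide (p - q < 2) else decide (p - q ≤ 2)

/-- Greedy computation of the Göllnitz–Gordon marking: the parts are processed
from smallest to largest (second argument: remaining parts in increasing
order; first argument: already processed parts with their marks), and each
part receives the least positive mark different from the marks of all already
processed conflicting parts. -/
def ggAux : List (ℕ × ℕ) → List ℕ → List (ℕ × ℕ)
  | acc, [] => acc
  | acc, p :: rest =>
      ggAux ((p, mex1 ((acc.filter fun q => conflict p q.1).map Prod.snd)) :: acc) rest

/-- The Göllnitz–Gordon marking `GG(π)` of `π`, as a list of (part, mark)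
pairs in decreasing order of parts. -/
def ggMarks (π : Partition) : List (ℕ × ℕ) := ggAux [] π.parts.reverse

/-- There is an `m`-marked part equal to `x` in `GG(π)`. -/
def Marked (π : Partition) (x m : ℕ) : Prop := (x, m) ∈ ggMarks π

instance (π : Partition) (x m : ℕ) : Decidable (Marked π x m) := by
  unfold Marked; infer_instance

/-- The `i`-th row of `GG(π)`: the `i`-marked parts, in decreasing order. -/
def row (π : Partition) (i : ℕ) : List ℕ :=
  ((ggMarks π).filter fun q => q.2 == i).map Prod.fst

/-- `N_i(π)`: the number of `i`-marked parts of `π`. -/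
def Nmk (π : Partition) (i : ℕ) : ℕ := (row π i).length

/-- `π^{(i)}_j` as a natural number (meaningful for `1 ≤ j ≤ N_i(π)`;
junk value `0` otherwise). -/
def nth (π : Partition) (i j : ℕ) : ℕ := (row π i).getD (j - 1) 0

/-- The canonical embedding of the natural numbers into `EReal`. -/
noncomputable def natE (n : ℕ) : EReal := ((n : ℝ) : EReal)

/-- `π^{(i)}_j` as an extended real, with the conventions `π^{(i)}_0 = +∞`
and `π^{(i)}_j = -∞` for `j > N_i(π)`. -/
noncomputable def rowVal (π : Partition) (i j : ℕ) : EReal :=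
  if j = 0 then ⊤
  else
    match (row π i)[j - 1]? with
    | some x => natE x
    | none => ⊥

/-- The largest `l ≥ 0` such that there is no odd part of `π` greater than or
equal to `π^{(2)}_l` (the indices `1 ≤ j ≤ N₂(π)` with this property form an
initial segment, so this is also their number). -/
def bigL (π : Partition) : ℕ :=
  ((List.range' 1 (Nmk π 2)).filter fun j =>
    decide (∀ x ∈ π.parts, x % 2 = 1 → x < nth π 2 j)).length

/-- `startPair π b = (starting type of π^{(2)}_b, s_b(π))` for `1 ≤ b ≤ N₂(π)`.
Starting types are encoded by integers: `-1` stands for `s₋₁`, and `0,1,2,3`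
for `s₀,s₁,s₂,s₃`; the value `9` is a junk value used when no case applies. -/
def startPair (π : Partition) : ℕ → ℤ × ℕ
  | 0 => (9, 0)
  | b + 1 =>
    let v := nth π 2 (b + 1)
    if bigL π < b + 1 then (-1, 0)
    else
      let okLow : Bool :=
        if b = 0 then !decide ((v + 2) ∈ π.parts)
        else !decide (Marked π (v + 2) 1) || decide ((startPair π b).2 = v + 2)
      let ok2 : Bool :=
        if b = 0 then decide (Marked π (v + 2) 1)
        else decide (Marked π (v + 2) 1) && !decide ((startPair π b).2 = v + 2)
      if decide (Marked π (v - 1) 1) && okLow then (0, v - 1)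
      else if decide (Marked π (v - 2) 1) && okLow then (1, v - 2)
      else if ok2 then (2, v + 2)
      else if decide (Marked π v 1) then (3, v)
      else (9, 0)

/-- The starting type of `π^{(2)}_b`, encoded as an integer. -/
def startType (π : Partition) (b : ℕ) : ℤ := (startPair π b).1

/-- The set `C(k,r)`: partitions with no repeated odd part, in which the parts
equal to `1` and `2` have marks at most `r - 1`, and whose Göllnitz–Gordon
marking has at most `k - 1` rows. -/
def C (k r : ℕ) : Set Partition :=
  { π | (∀ x, x % 2 = 1 → π.parts.count x ≤ 1) ∧
        (∀ x m, Marked π x m → x ≤ 2 → m ≤ r - 1) ∧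
        (∀ x m, Marked π x m → m ≤ k - 1) }

/-- The set `C_<(k,r|p,t)`. -/
noncomputable def Clt (k r p t : ℕ) : Set Partition :=
  { π | π ∈ C k r ∧
        (∀ x ∈ π.parts, x % 2 = 1 → x < 2 * t + 1) ∧
        rowVal π 2 (p + 1) < natE (2 * t + 1) ∧
        natE (2 * t + 1) < rowVal π 2 p ∧
        (rowVal π 2 p = natE (2 * t + 2) →
          startType π p = 2 ∨ startType π p = 3) ∧
        (rowVal π 2 (p + 1) = natE (2 * t) →
          startType π (p + 1) = 0 ∨ startType π (p + 1) = 1) }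

/-- The set `C_=(k,r|p,t)`. -/
noncomputable def Ceq (k r p t : ℕ) : Set Partition :=
  { π | π ∈ C k r ∧
        (2 * t + 1) ∈ π.parts ∧
        (∀ x ∈ π.parts, x % 2 = 1 → x ≤ 2 * t + 1) ∧
        (∀ m, Marked π (2 * t + 1) m → m ≤ 2) ∧
        natE (2 * t + 2) ≤ rowVal π 2 p ∧
        rowVal π 2 (p + 1) ≤ natE (2 * t + 2) ∧
        ((∃ j, 1 ≤ j ∧ j ≤ Nmk π 2 ∧ nth π 2 j = 2 * t + 2 ∧ startType π j = 0) →
          rowVal π 2 (p + 1) = natE (2 * t + 2) ∧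
          ∃ i, 1 ≤ i ∧ i ≤ p + 1 ∧
            nth π 2 i = 2 * t + 2 + 4 * (p + 1 - i) ∧
            π.parts.count (2 * t + 2 + 4 * (p + 1 - i)) = 1) ∧
        ((∃ j, 1 ≤ j ∧ j ≤ Nmk π 2 ∧ nth π 2 j = 2 * t + 2 ∧ startType π j = 2) →
          rowVal π 2 p = natE (2 * t + 2)) ∧
        ((2 * t + 2) ∈ π.parts → ¬ Marked π (2 * t + 2) 2 →
          rowVal π 2 p = natE (2 * t + 4) ∧ startType π p = 3 ∧
          ∃ i, 1 ≤ i ∧ i ≤ p ∧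
            nth π 2 i = 2 * t + 4 + 4 * (p - i) ∧
            (2 * t + 4 + 4 * (p - i) + 2) ∉ π.parts) }

/-- The first starting cluster index `p₁` of `π` (with `p₀ = p + 1`): the least
`j ≥ 1` such that `π^{(2)}_j = π^{(2)}_p + 4(p - j)` and all of
`π^{(2)}_j, …, π^{(2)}_p` have the same starting type as `π^{(2)}_p`. -/
def firstCluster (π : Partition) (p : ℕ) : ℕ :=
  ((List.range' 1 p).filter fun j =>
    (List.range' j (p + 1 - j)).all fun i =>
      decide (nth π 2 i = nth π 2 p + 4 * (p - i)) &&
      decide (startType π i = startType π p)).headD p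

/-- The set `ℰ(k,r)` of partitions in `C(k,r)` with no odd parts. -/
def E (k r : ℕ) : Set Partition :=
  { π | π ∈ C k r ∧ ∀ x ∈ π.parts, x % 2 = 0 }

/-- `C_<(k,r|m) = ⋃_{p+t=m} C_<(k,r|p,t)`. -/
noncomputable def Cltm (k r m : ℕ) : Set Partition :=
  { π | ∃ p t, p + t = m ∧ π ∈ Clt k r p t }

/-- `C_=(k,r|m) = ⋃_{p+t=m} C_=(k,r|p,t)`. -/
noncomputable def Ceqm (k r m : ℕ) : Set Partition :=
  { π | ∃ p t, p + t = m ∧ π ∈ Ceq k r p t }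

/-- `I_N`: partitions into distinct odd parts, each at least `2N + 1`. -/
def Iset (N : ℕ) : Set Partition :=
  { ζ | (∀ x ∈ ζ.parts, x % 2 = 1 ∧ 2 * N + 1 ≤ x) ∧ ζ.parts.Nodup }

/-- `F(3,3)`: pairs `(π, ζ)` with `π ∈ ℰ(3,3)` and `ζ ∈ I_{N₂(π)}`. -/
noncomputable def F33 : Set (Partition × Partition) :=
  { pq | pq.1 ∈ E 3 3 ∧ pq.2 ∈ Iset (Nmk pq.1 2) }


open List in
section
open Bressoud

lemma mex1_not_mem (s : List ℕ) : mex1 s ∉ s := (Nat.find_spec (exists_pos_not_mem s)).2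

def Pc : ℕ × ℕ → ℕ × ℕ → Prop := fun a b => a.2 = b.2 → conflict a.1 b.1 = false

lemma ggAux_pairwise : ∀ (l : List ℕ) (acc : List (ℕ × ℕ)), acc.Pairwise Pc →
    (ggAux acc l).Pairwise Pc := by
  intro l
  induction l with
  | nil => intro acc h; exact h
  | cons q rest ih =>
    intro acc h
    refine ih _ (List.Pairwise.cons ?_ h)
    intro b hb hmk
    by_contra hc
    have hcb : conflict q b.1 = true := by
      revert hc; cases conflict q b.1 <;> simp
    have hbmem : b.2 ∈ (acc.filter fun x => conflict q x.1).map Prod.snd :=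
      List.mem_map_of_mem (List.mem_filter.mpr ⟨hb, hcb⟩)
    rw [← hmk] at hbmem
    exact mex1_not_mem _ hbmem

lemma ggMarks_pairwise (π : Partition) : (ggMarks π).Pairwise Pc :=
  ggAux_pairwise _ [] List.Pairwise.nil

lemma ggAux_map_fst : ∀ (l : List ℕ) (acc : List (ℕ × ℕ)),
    (ggAux acc l).map Prod.fst = l.reverse ++ acc.map Prod.fst := by
  intro l
  induction l with
  | nil => intro acc; simp [ggAux]
  | cons q rest ih => intro acc; simp [ggAux, ih]

lemma ggMarks_map_fst (π : Partition) : (ggMarks π).map Prod.fst = π.parts := by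
  simp [ggMarks, ggAux_map_fst]

lemma row_sublist (π : Partition) (i : ℕ) : (row π i).Sublist π.parts := by
  rw [← ggMarks_map_fst π]
  exact List.Sublist.map _ List.filter_sublist

lemma row_sorted (π : Partition) (i : ℕ) : (row π i).Pairwise (· ≥ ·) :=
  List.Pairwise.sublist (row_sublist π i) π.sorted

lemma row_pairwise (π : Partition) : (row π 2).Pairwise fun a b => conflict a b = false := by
  unfold row
  rw [List.pairwise_map]
  refine List.Pairwise.imp_of_mem ?_ ((ggMarks_pairwise π).filter _)
  intro a b ha hb hP
  have ha2 : a.2 = 2 := by simpa using (List.mem_filter.mp ha).2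
  have hb2 : b.2 = 2 := by simpa using (List.mem_filter.mp hb).2
  exact hP (ha2.trans hb2.symm)

end
lemma chain_gap (R : List ℕ) (hpw : R.Pairwise fun a b => conflict a b = false) :
    ∀ (n i : ℕ) (a b : ℕ), R[i]? = some a → R[i + n]? = some b →
      (∀ k c, i ≤ k → k ≤ i + n → R[k]? = some c → c % 2 = 0) →
      b + 3 * n ≤ a := by
  intro n
  induction n with
  | zero =>
    intro i a b ha hb _
    rw [Nat.add_zero, ha] at hb
    have : b = a := by injection hb.symm
    omega
  | succ m ih =>
    intro i a b ha hb hev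
    have hlen : i + (m + 1) < R.length := (List.getElem?_eq_some_iff.mp hb).1
    have h1 : i + 1 < R.length := by omega
    have hc : R[i + 1]? = some R[i + 1] := List.getElem?_eq_some_iff.mpr ⟨h1, rfl⟩
    set c := R[i + 1] with hcdef
    have hconf : conflict a c = false := by
      have hi : i < R.length := (List.getElem?_eq_some_iff.mp ha).1
      have h2 := List.pairwise_iff_getElem.mp hpw i (i + 1) hi h1 (by omega)
      obtain ⟨_, rfl⟩ := List.getElem?_eq_some_iff.mp ha
      exact h2
    have haev : a % 2 = 0 := hev i a le_rfl (by omega) ha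
    have hac : c + 3 ≤ a := by
      unfold conflict at hconf
      rw [if_neg (by omega)] at hconf
      simp at hconf
      omega
    have hib : (i + 1) + m = i + (m + 1) := by omega
    have := ih (i + 1) c b hc (by rw [hib]; exact hb)
      (fun k d hk1 hk2 hd => hev k d (by omega) (by omega) hd)
    omega
lemma natE_lt_natE {a b : ℕ} : natE a < natE b ↔ a < b := by
  unfold natE; exact_mod_cast Iff.rfl

lemma rowVal_eq_of_getElem? (π : Partition) {i j : ℕ} (hj : j ≠ 0) {x : ℕ}
    (h : (row π i)[j - 1]? = some x) : rowVal π i j = natE x := by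
  rw [rowVal, if_neg hj, h]

lemma exists_of_natE_lt_rowVal (π : Partition) {i j c : ℕ} (hj : j ≠ 0)
    (h : natE c < rowVal π i j) : ∃ x, (row π i)[j - 1]? = some x ∧ c < x := by
  rw [rowVal, if_neg hj] at h
  cases hx : (row π i)[j - 1]? with
  | none => rw [hx] at h; exact absurd h not_lt_bot
  | some x =>
    rw [hx] at h
    exact ⟨x, rfl, natE_lt_natE.mp h⟩

lemma key_lemma (k r : ℕ) (π : Partition) {p t p' t' : ℕ} (hlt : p' < p)
    (hsum : p + t = p' + t') (hπ : π ∈ Clt k r p t) (hπ' : π ∈ Clt k r p' t') : False := by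
  obtain ⟨hC, hodd, h1, h2, h3, h4⟩ := hπ
  obtain ⟨hC', hodd', h1', h2', h3', h4'⟩ := hπ'
  have hp0 : p ≠ 0 := by omega
  obtain ⟨v, hv, hv1⟩ := exists_of_natE_lt_rowVal π hp0 h2
  have hlenp : p - 1 < (row π 2).length := (List.getElem?_eq_some_iff.mp hv).1
  have hlenp' : p' < (row π 2).length := by omega
  have hw : (row π 2)[p']? = some (row π 2)[p'] := List.getElem?_eq_some_iff.mpr ⟨hlenp', rfl⟩
  set w := (row π 2)[p'] with hwdef
  -- from h1' : rowVal π 2 (p'+1) < natE (2t'+1)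
  have hw2 : w < 2 * t' + 1 := by
    have := rowVal_eq_of_getElem? π (i := 2) (j := p' + 1) (by omega) (by simpa using hw)
    rw [this] at h1'
    exact natE_lt_natE.mp h1'
  -- evenness of entries between p' and p-1
  have hev : ∀ j c, p' ≤ j → j ≤ p' + (p - 1 - p') → (row π 2)[j]? = some c → c % 2 = 0 := by
    intro j c hj1 hj2 hc
    have hjlen : j < (row π 2).length := (List.getElem?_eq_some_iff.mp hc).1
    obtain ⟨_, rfl⟩ := List.getElem?_eq_some_iff.mp hc
    have hmem : (row π 2)[j] ∈ π.parts := (row_sublist π 2).mem ((row π 2).getElem_mem hjlen)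
    have hge : v ≤ (row π 2)[j] := by
      rcases Nat.lt_or_ge j (p - 1) with hlt' | hge'
      · have := List.pairwise_iff_getElem.mp (row_sorted π 2) j (p - 1) hjlen hlenp hlt'
        obtain ⟨_, rfl⟩ := List.getElem?_eq_some_iff.mp hv
        exact this
      · have hj : j = p - 1 := by omega
        subst hj
        obtain ⟨_, h⟩ := List.getElem?_eq_some_iff.mp hv
        omega
    by_contra hoddc
    have : (row π 2)[j] % 2 = 1 := by omega
    have := hodd _ hmem this
    omega
  have hchain := chain_gap (row π 2) (row_pairwise π) (p - 1 - p') p' w v hw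
    (by rw [show p' + (p - 1 - p') = p - 1 by omega]; exact hv) hev
  -- arithmetic conclusion: p = p' + 1, v = 2t+2 = 2t'
  have hp1 : p = p' + 1 := by omega
  have hv2 : v = 2 * t + 2 := by omega
  have ht' : 2 * t' = 2 * t + 2 := by omega
  have hrv : rowVal π 2 p = natE (2 * t + 2) := by
    rw [← hv2]; exact rowVal_eq_of_getElem? π hp0 hv
  have hs1 := h3 hrv
  have hrv' : rowVal π 2 (p' + 1) = natE (2 * t') := by
    rw [← hp1, ht']; exact hrv
  have hs2 := h4' hrv'
  rw [← hp1] at hs2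
  omega
/-- Proposition 5.1: the pair `(p,t)` with `p + t = m` and
`π ∈ C_<(k,r|p,t)` is unique. -/
theorem Clt_pair_unique (k r m p t : ℕ) (hrk : r ≤ k) (hr : 3 ≤ r)
    (hm : p + t = m) (π : Partition) (hπ : π ∈ Clt k r p t) :
    ¬ ∃ p' t' : ℕ, p' ≠ p ∧ t' ≠ t ∧ p' + t' = m ∧ π ∈ Clt k r p' t' := by
  rintro ⟨p', t', hp', ht', hm', hπ'⟩
  rcases Nat.lt_trichotomy p' p with h | h | h
  · exact key_lemma k r π h (by omega) hπ hπ'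
  · exact hp' h
  · exact key_lemma k r π h (by omega) hπ' hπ

end Bressoud
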